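/- Let p be an odd prime, χ the Legendre symbol modulo p, and a an integer with a ≢ 0 (mod p). Then Σ_{u mod p} χ(u² − 1) e_p(2 a u) = S(a, a; p). -/

import Mathlib

/-- `e_c(x) = exp(2πix/c)`. -/
noncomputable def ec (c : ℕ) (x : ℤ) : ℂ :=
  Complex.exp (2 * Real.pi * Complex.I * x / c)

/-- The Kloosterman sum `S(m, n; c) = Σ_{a d ≡ 1 (mod c)} e_c(a m + d n)`. -/
noncomputable def kloos (m n : ℤ) (c : ℕ) : ℂ :=
  ∑ a ∈ Finset.range c, ∑ d ∈ Finset.range c,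
    if (a * d) % c = 1 % c then ec c (a * m + d * n) else 0

/-- `G(m, m₁, m₂; c)` : complete sum of Kloosterman sums twisted by `χ_q`, for `q ∣ c`. -/
noncomputable def Gsum (q : ℕ) (m m1 m2 : ℤ) (c : ℕ) : ℂ :=
  ∑ a ∈ Finset.range c, ∑ a1 ∈ Finset.range c, ∑ a2 ∈ Finset.range c,
    (jacobiSym ((a : ℤ) * a1 * a2) q : ℂ) * kloos a ((a1 : ℤ) * a2) c *
      ec c (a * m + a1 * m1 + a2 * m2)

/-- `G'(m, m₁, m₂; c) = e_c(−m m₁ m₂) G(m, m₁, m₂; c)`. -/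
noncomputable def Gsum' (q : ℕ) (m m1 m2 : ℤ) (c : ℕ) : ℂ :=
  ec c (-(m * m1 * m2)) * Gsum q m m1 m2 c

/-- `H_r(m, m₁, m₂; q) = Σ_{u,v mod q} χ_q(v (u + v m₁)(v r − m)(u r + m m₁)) e_q(u m₂)`. -/
noncomputable def Hr (r m m1 m2 : ℤ) (q : ℕ) : ℂ :=
  ∑ u ∈ Finset.range q, ∑ v ∈ Finset.range q,
    (jacobiSym ((v : ℤ) * ((u : ℤ) + v * m1) * ((v : ℤ) * r - m) * ((u : ℤ) * r + m * m1)) q : ℂ) *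
      ec q (u * m2)

/-- `H(w; q) = Σ_{u,v mod q} χ_q(u v (u+1)(v+1)) e_q((u v − 1) w)`. -/
noncomputable def Hw (w : ℤ) (q : ℕ) : ℂ :=
  ∑ u ∈ Finset.range q, ∑ v ∈ Finset.range q,
    (jacobiSym ((u : ℤ) * v * ((u : ℤ) + 1) * ((v : ℤ) + 1)) q : ℂ) *
      ec q (((u : ℤ) * v - 1) * w)

/-- Reduced sum `H*(w; q)`, restricted by `gcd(uv − 1, q) = 1`. -/
noncomputable def Hstar (w : ℤ) (q : ℕ) : ℂ :=
  ∑ u ∈ Finset.range q, ∑ v ∈ Finset.range q,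
    if Int.gcd ((u : ℤ) * v - 1) q = 1 then
      (jacobiSym ((u : ℤ) * v * ((u : ℤ) + 1) * ((v : ℤ) + 1)) q : ℂ) *
        ec q (((u : ℤ) * v - 1) * w)
    else 0

/-- The Ramanujan sum `R(n; k) = Σ_{d mod k, (d,k)=1} e_k(d n)`. -/
noncomputable def Ram (n : ℤ) (k : ℕ) : ℂ :=
  ∑ d ∈ Finset.range k, if Nat.gcd d k = 1 then ec k (d * n) else 0

/-- The Gauss sum `τ(χ_q) = Σ_{x mod q} χ_q(x) e_q(x)`. -/
noncomputable def gaussτ (q : ℕ) : ℂ :=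
  ∑ x ∈ Finset.range q, (jacobiSym (x : ℤ) q : ℂ) * ec q (x : ℤ)

section Aux

open Finset Complex

lemma ec_add (c : ℕ) (x y : ℤ) : ec c (x + y) = ec c x * ec c y := by
  unfold ec
  rw [← Complex.exp_add]
  congr 1
  push_cast
  ring

lemma ec_congr {c : ℕ} (hc : c ≠ 0) {x y : ℤ} (h : (c : ℤ) ∣ x - y) : ec c x = ec c y := by
  obtain ⟨k, hk⟩ := h
  have hx : x = y + c * k := by linarith
  subst hx
  unfold ec
  rw [← mul_one (Complex.exp (2 * Real.pi * Complex.I * (y : ℂ) / c)),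
    ← Complex.exp_int_mul_two_pi_mul_I k, ← Complex.exp_add]
  congr 1
  have hcC : (c : ℂ) ≠ 0 := Nat.cast_ne_zero.mpr hc
  field_simp
  push_cast
  ring

lemma ec_cast {p : ℕ} [NeZero p] (x : ℤ) : ec p x = ec p (((x : ZMod p).val : ℤ)) := by
  apply ec_congr (NeZero.ne p)
  rw [← ZMod.intCast_zmod_eq_zero_iff_dvd]
  push_cast [ZMod.natCast_val, ZMod.intCast_cast]
  simp

lemma sum_ec {p : ℕ} (hp : p ≠ 0) {t : ℤ} (ht : ¬ (p : ℤ) ∣ t) :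
    ∑ u ∈ Finset.range p, ec p (t * u) = 0 := by
  have hpC : (p : ℂ) ≠ 0 := Nat.cast_ne_zero.mpr hp
  have hpow : ∀ u : ℕ, ec p (t * u) = (ec p t) ^ u := by
    intro u
    unfold ec
    rw [← Complex.exp_nat_mul]
    congr 1
    push_cast
    ring
  have hne : ec p t ≠ 1 := by
    intro h
    unfold ec at h
    rw [Complex.exp_eq_one_iff] at h
    obtain ⟨n, hn⟩ := h
    have h2 : (2 : ℂ) * Real.pi * Complex.I ≠ 0 := by
      simp [Real.pi_ne_zero, Complex.I_ne_zero]
    apply ht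
    refine ⟨n, ?_⟩
    have h3 : (2 : ℂ) * Real.pi * Complex.I * (t : ℂ)
        = (2 : ℂ) * Real.pi * Complex.I * ((p : ℂ) * n) := by
      field_simp at hn
      linear_combination (2 * (Real.pi : ℂ) * Complex.I) * hn
    have h4 := mul_left_cancel₀ h2 h3
    exact_mod_cast h4
  have hcyc : (ec p t) ^ p = 1 := by
    unfold ec
    rw [← Complex.exp_nat_mul]
    rw [show (p : ℂ) * (2 * Real.pi * Complex.I * t / p) = t * (2 * Real.pi * Complex.I) by
      field_simp]
    exact Complex.exp_int_mul_two_pi_mul_I t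
  calc ∑ u ∈ Finset.range p, ec p (t * u) = ∑ u ∈ Finset.range p, (ec p t) ^ u :=
        Finset.sum_congr rfl fun u _ => hpow u
    _ = ((ec p t) ^ p - 1) / (ec p t - 1) := geom_sum_eq hne p
    _ = 0 := by rw [hcyc]; simp

lemma sum_range_val {p : ℕ} [NeZero p] {β : Type*} [AddCommMonoid β] (f : ℕ → β) :
    ∑ u ∈ Finset.range p, f u = ∑ x : ZMod p, f (ZMod.val x) := by
  refine Finset.sum_nbij' (fun u => (u : ZMod p)) (fun x => x.val) ?_ ?_ ?_ ?_ ?_ <;>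
    intro x hx
  · exact Finset.mem_univ _
  · exact Finset.mem_range.mpr (ZMod.val_lt x)
  · exact ZMod.val_cast_of_lt (Finset.mem_range.mp hx)
  · simp [ZMod.natCast_val, ZMod.cast_id]
  · rw [ZMod.val_cast_of_lt (Finset.mem_range.mp hx)]

end Aux

/-- equation (14.7): for `p` an odd prime and `a ≢ 0 (mod p)`,
`Σ_{u mod p} χ(u² − 1) e_p(2 a u) = S(a, a; p)`. -/
theorem quadratic_sum_eq_kloosterman (p : ℕ) (hp : p.Prime) (hodd : Odd p) (a : ℤ)
    (ha : ¬ (p : ℤ) ∣ a) :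
    (∑ u ∈ Finset.range p, (jacobiSym ((u : ℤ) ^ 2 - 1) p : ℂ) * ec p (2 * a * u)) =
      kloos a a p := by
  haveI : Fact p.Prime := ⟨hp⟩
  haveI : NeZero p := ⟨hp.pos.ne'⟩
  have hp0 : p ≠ 0 := hp.pos.ne'
  have hp2 : p ≠ 2 := by rintro rfl; exact (by decide : ¬ Odd 2) hodd
  set α : ZMod p := (a : ZMod p) with hαdef
  have hα : α ≠ 0 := fun h => ha ((ZMod.intCast_zmod_eq_zero_iff_dvd a p).mp h)
  have h2 : (2 : ZMod p) ≠ 0 := by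
    intro h
    have h' : ((2 : ℕ) : ZMod p) = 0 := by exact_mod_cast h
    rw [ZMod.natCast_eq_zero_iff] at h'
    exact hp2 ((Nat.prime_dvd_prime_iff_eq hp Nat.prime_two).mp h')
  set F : ZMod p → ℂ := fun x => ec p (((2 * α * x).val : ℤ)) with hF
  -- Step A : rewrite LHS over `ZMod p`
  have stepA : (∑ u ∈ Finset.range p, (jacobiSym ((u : ℤ) ^ 2 - 1) p : ℂ) * ec p (2 * a * u))
      = ∑ x : ZMod p, ((quadraticChar (ZMod p) (x ^ 2 - 1) : ℤ) : ℂ) * F x := by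
    rw [sum_range_val (f := fun u => (jacobiSym ((u : ℤ) ^ 2 - 1) p : ℂ) * ec p (2 * a * u))]
    refine Finset.sum_congr rfl fun x _ => ?_
    congr 1
    · rw [← jacobiSym.legendreSym.to_jacobiSym]
      show (((quadraticChar (ZMod p) ((((x.val : ℤ) ^ 2 - 1 : ℤ) : ZMod p)) : ℤ)) : ℂ) = _
      congr 2
      push_cast [ZMod.natCast_val, ZMod.cast_id]
      ring
    · rw [hF, ec_cast (2 * a * (x.val : ℤ))]
      congr 2
      push_cast [ZMod.natCast_val, ZMod.cast_id]
      ring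
  -- Step B : vanishing of pure exponential sums
  have stepB : ∀ c : ZMod p, c ≠ 0 → (∑ x : ZMod p, ec p (((c * x).val : ℤ))) = 0 := by
    intro c hc
    have hbij : Function.Bijective (fun x : ZMod p => c * x) := (Equiv.mulLeft₀ c hc).bijective
    rw [Fintype.sum_bijective _ hbij _ (fun y => ec p ((y.val : ℤ))) (fun x => rfl)]
    rw [← sum_range_val (f := fun n : ℕ => ec p (n : ℤ))]
    have hone : ¬ (p : ℤ) ∣ 1 := fun h => hp.one_lt.ne' (Nat.dvd_one.mp (by exact_mod_cast h))
    have := sum_ec hp0 hone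
    simpa using this
  have hz : ∑ x : ZMod p, F x = 0 := by
    have := stepB (2 * α) (mul_ne_zero h2 hα)
    simpa [hF, mul_assoc] using this
  -- card of square roots
  have hFchar : ringChar (ZMod p) ≠ 2 := by rw [ZMod.ringChar_zmod_n]; exact hp2
  have cardid : ∀ b : ZMod p, ((quadraticChar (ZMod p) b : ℤ) : ℂ) + 1
      = (((Finset.univ.filter fun y : ZMod p => y ^ 2 = b).card : ℕ) : ℂ) := by
    intro b
    have h := quadraticChar_card_sqrts hFchar b
    rw [Set.toFinset_setOf] at h
    exact_mod_cast h.symm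
  -- the bijection step
  have bij : (∑ x : ZMod p, ∑ y : ZMod p, if y ^ 2 = x ^ 2 - 1 then F x else 0)
      = ∑ b : ZMod p, (if b ≠ 0 then ec p (((b * α + b⁻¹ * α).val : ℤ)) else 0) := by
    have e1 : (∑ x : ZMod p, ∑ y : ZMod p, if y ^ 2 = x ^ 2 - 1 then F x else 0)
        = ∑ z ∈ (Finset.univ ×ˢ Finset.univ).filter
            (fun z : ZMod p × ZMod p => z.2 ^ 2 = z.1 ^ 2 - 1), F z.1 := by
      rw [Finset.sum_filter, Finset.sum_product]
    have e2 : (∑ b : ZMod p, if b ≠ 0 then ec p (((b * α + b⁻¹ * α).val : ℤ)) else 0)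
        = ∑ b ∈ Finset.univ.filter (fun b : ZMod p => b ≠ 0),
            ec p (((b * α + b⁻¹ * α).val : ℤ)) := (Finset.sum_filter _ _).symm
    rw [e1, e2]
    refine Finset.sum_nbij' (fun z => z.1 + z.2)
      (fun b => ((b + b⁻¹) / 2, (b - b⁻¹) / 2)) ?_ ?_ ?_ ?_ ?_
    · intro z hz'
      simp only [Finset.mem_filter, Finset.mem_product, Finset.mem_univ, true_and] at hz' ⊢
      have key : (z.1 + z.2) * (z.1 - z.2) = 1 := by linear_combination -hz'
      intro h0
      rw [h0, zero_mul] at key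
      exact zero_ne_one key
    · intro b hb
      simp only [Finset.mem_filter, Finset.mem_univ, true_and] at hb ⊢
      field_simp
      simp
      ring
    · intro z hz'
      simp only [Finset.mem_filter, Finset.mem_product, Finset.mem_univ, true_and] at hz'
      have key : (z.1 + z.2) * (z.1 - z.2) = 1 := by linear_combination -hz'
      have hinv : (z.1 + z.2)⁻¹ = z.1 - z.2 := (eq_inv_of_mul_eq_one_right key).symm
      show ((z.1 + z.2 + (z.1 + z.2)⁻¹) / 2, (z.1 + z.2 - (z.1 + z.2)⁻¹) / 2) = z
      rw [hinv]
      refine Prod.ext ?_ ?_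
      · show (z.1 + z.2 + (z.1 - z.2)) / 2 = z.1
        field_simp
        ring
      · show (z.1 + z.2 - (z.1 - z.2)) / 2 = z.2
        field_simp
        ring
    · intro b hb
      simp only [Finset.mem_filter, Finset.mem_univ, true_and] at hb
      show (b + b⁻¹) / 2 + (b - b⁻¹) / 2 = b
      field_simp
      ring
    · intro z hz'
      simp only [Finset.mem_filter, Finset.mem_product, Finset.mem_univ, true_and] at hz'
      have key : (z.1 + z.2) * (z.1 - z.2) = 1 := by linear_combination -hz'
      have hinv : (z.1 + z.2)⁻¹ = z.1 - z.2 := (eq_inv_of_mul_eq_one_right key).symm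
      rw [hF]
      have harg : (z.1 + z.2) * α + (z.1 + z.2)⁻¹ * α = 2 * α * z.1 := by
        rw [hinv]; ring
      rw [harg]
  -- kloosterman side
  have stepF : kloos a a p
      = ∑ b : ZMod p, (if b ≠ 0 then ec p (((b * α + b⁻¹ * α).val : ℤ)) else 0) := by
    unfold kloos
    rw [sum_range_val (f := fun b => ∑ d ∈ Finset.range p,
      if (b * d) % p = 1 % p then ec p (b * a + d * a) else 0)]
    refine Finset.sum_congr rfl fun x _ => ?_
    rw [sum_range_val (f := fun d =>
      if (x.val * d) % p = 1 % p then ec p (x.val * a + d * a) else 0)]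
    have h1p : 1 % p = 1 := Nat.mod_eq_of_lt hp.one_lt
    by_cases hx : x = 0
    · subst hx
      simp [ZMod.val_zero, h1p]
    · rw [if_pos hx]
      have hcond : ∀ y : ZMod p, ((x.val * y.val) % p = 1 % p) ↔ y = x⁻¹ := by
        intro y
        rw [show ((x.val * y.val) % p = 1 % p) ↔ (x.val * y.val : ℕ) ≡ 1 [MOD p] from Iff.rfl,
          ← ZMod.natCast_eq_natCast_iff]
        push_cast [ZMod.natCast_val, ZMod.cast_id]
        constructor
        · intro h; exact eq_inv_of_mul_eq_one_right h
        · rintro rfl; exact mul_inv_cancel₀ hx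
      calc ∑ y : ZMod p, (if (x.val * y.val) % p = 1 % p then
              ec p ((x.val : ℤ) * a + (y.val : ℤ) * a) else 0)
          = ∑ y : ZMod p, (if y = x⁻¹ then ec p ((x.val : ℤ) * a + (y.val : ℤ) * a) else 0) :=
            Finset.sum_congr rfl fun y _ => if_congr (hcond y) rfl rfl
        _ = ec p ((x.val : ℤ) * a + ((x⁻¹).val : ℤ) * a) := by
            rw [Finset.sum_ite_eq' Finset.univ x⁻¹
              (fun y => ec p ((x.val : ℤ) * a + (y.val : ℤ) * a))]
            simp
        _ = ec p (((x * α + x⁻¹ * α).val : ℤ)) := by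
            rw [ec_cast ((x.val : ℤ) * a + ((x⁻¹).val : ℤ) * a)]
            have harg : (((x.val : ℤ) * a + ((x⁻¹).val : ℤ) * a : ℤ) : ZMod p)
                = x * α + x⁻¹ * α := by
              push_cast [ZMod.natCast_val, ZMod.cast_id]
              rfl
            rw [harg]
  -- final assembly
  rw [stepA, stepF, ← bij]
  calc ∑ x : ZMod p, ((quadraticChar (ZMod p) (x ^ 2 - 1) : ℤ) : ℂ) * F x
      = ∑ x : ZMod p, (((quadraticChar (ZMod p) (x ^ 2 - 1) : ℤ) : ℂ) * F x + F x) := by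
        rw [Finset.sum_add_distrib, hz, add_zero]
    _ = ∑ x : ZMod p,
          (((Finset.univ.filter fun y : ZMod p => y ^ 2 = x ^ 2 - 1).card : ℕ) : ℂ) * F x := by
        refine Finset.sum_congr rfl fun x _ => ?_
        rw [← cardid (x ^ 2 - 1)]
        ring
    _ = ∑ x : ZMod p, ∑ y : ZMod p, (if y ^ 2 = x ^ 2 - 1 then F x else 0) := by
        refine Finset.sum_congr rfl fun x _ => ?_
        rw [← Finset.sum_filter, Finset.sum_const, nsmul_eq_mul]
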